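/- Fix 0 < α < 1 and define f(x) = ∑_{j=0}^∞ 2^{-jα} sin(2π 2^j x). Then for each N ≥ 1, Θ_{2^{-N}}(f)(x) = 2 ∑_{j=0}^∞ c_{j,N} cos(2π 2^j x) where c_{j,N} = ∫_{2^{j-N}}^{2^j} sin(2πt) t^{-(1+α)} dt; moreover there is a constant c₁(α) > 0 with |c_{j,N}| ≤ c₁(α) 2^{-(j-N)(1+α)} for all j, N ≥ 1, and hence ∑_{j ≥ N} |c_{j,N}| ≤ 2 c₁(α). -/

import Mathlib

open MeasureTheory intervalIntegral Real Set

/-- For the lacunary function `f(x) = ∑_j 2^{-jα} sin(2π 2^j x)`: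
the cosine expansion of `Θ_{2^{-N}}(f)`, the coefficient decay
`|c_{j,N}| ≤ c₁ 2^{-(j-N)(1+α)}`, and the tail bound `∑_{j ≥ N} |c_{j,N}| ≤ 2c₁`. -/
lemma hder_u (a : ℝ) (ha : a ≠ 0) (x : ℝ) :
    HasDerivAt (fun t : ℝ => -Real.cos (a * t) / a) (Real.sin (a*x)) x := by
  have h := ((Real.hasDerivAt_cos (a*x)).comp x ((hasDerivAt_id x).const_mul a))
  have h2 : HasDerivAt (fun t : ℝ => -Real.cos (a * t) / a)
      (-(-Real.sin (a * x) * (a * 1)) / a) x := h.neg.div_const a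
  convert h2 using 1
  field_simp

lemma contOn_rpow (p : ℝ) (s : Set ℝ) (hs : ∀ t ∈ s, (0:ℝ) < t) :
    ContinuousOn (fun t : ℝ => t ^ p) s :=
  ContinuousOn.rpow_const continuousOn_id (fun t ht => Or.inl (hs t ht).ne')

lemma contOn_g (α : ℝ) (s : Set ℝ) (hs : ∀ t ∈ s, (0:ℝ) < t) :
    ContinuousOn (fun t : ℝ => Real.sin (2*π*t) / t ^ (1+α)) s := by
  apply ContinuousOn.div
  · exact (Real.continuous_sin.comp (continuous_const.mul continuous_id)).continuousOn
  · exact contOn_rpow _ s hs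
  · intro t ht
    exact (Real.rpow_pos_of_pos (hs t ht) _).ne'

lemma bound_triv (α a b : ℝ) (hα : 0 < α) (ha : 0 < a) (hab : a ≤ b) :
    |∫ t in a..b, Real.sin (2*π*t) / t ^ (1+α)| ≤ a ^ (-α) / α := by
  have hpos : ∀ t ∈ Set.uIcc a b, (0:ℝ) < t := by
    rw [Set.uIcc_of_le hab]; intro t ht; exact lt_of_lt_of_le ha ht.1
  have h0 : (0:ℝ) ∉ Set.uIcc a b := fun h => lt_irrefl 0 (hpos 0 h)
  have hInt2 : IntervalIntegrable (fun t : ℝ => t ^ (-(1+α))) volume a b :=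
    (contOn_rpow _ _ hpos).intervalIntegrable
  have hab' : b ^ (-α) ≤ a ^ (-α) :=
    Real.rpow_le_rpow_of_nonpos ha hab (by linarith)
  have h2 : ∫ t in a..b, (fun t : ℝ => t ^ (-(1+α))) t = (a ^ (-α) - b ^ (-α)) / α := by
    rw [integral_rpow (Or.inr ⟨by intro h; nlinarith, h0⟩)]
    rw [show -(1+α) + 1 = -α by ring]
    rw [div_eq_div_iff (by linarith) hα.ne']
    ring
  have h1 : |∫ t in a..b, Real.sin (2*π*t) / t ^ (1+α)| ≤ |∫ t in a..b, t ^ (-(1+α))| := by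
    rw [← Real.norm_eq_abs]
    apply intervalIntegral.norm_integral_le_abs_of_norm_le ?_ hInt2
    filter_upwards [ae_restrict_mem measurableSet_uIoc] with t ht
    have ht0 : 0 < t := by
      rw [Set.uIoc_of_le hab] at ht; exact lt_of_lt_of_le ha ht.1.le
    rw [Real.norm_eq_abs, abs_div, Real.rpow_neg ht0.le,
      abs_of_pos (Real.rpow_pos_of_pos ht0 _), div_eq_mul_inv]
    have : |Real.sin (2*π*t)| ≤ 1 := abs_le.mpr ⟨Real.neg_one_le_sin _, Real.sin_le_one _⟩
    exact mul_le_of_le_one_left (by positivity) this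
  calc |∫ t in a..b, Real.sin (2*π*t) / t ^ (1+α)|
      ≤ |(a ^ (-α) - b ^ (-α)) / α| := by rw [← h2]; exact h1
    _ = (a ^ (-α) - b ^ (-α)) / α :=
        abs_of_nonneg (div_nonneg (sub_nonneg.mpr hab') hα.le)
    _ ≤ a ^ (-α) / α := by
        have hb0 : (0:ℝ) ≤ b ^ (-α) := Real.rpow_nonneg (ha.le.trans hab) _
        gcongr
        linarith

lemma bound_osc (α a b : ℝ) (hα : 0 < α) (ha : 1 ≤ a) (hab : a ≤ b) :
    |∫ t in a..b, Real.sin (2*π*t) / t ^ (1+α)| ≤ a ^ (-(1+α)) := by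
  have ha0 : (0:ℝ) < a := lt_of_lt_of_le one_pos ha
  set p : ℝ := -(1+α) with hp
  have hpneg : p < 0 := by rw [hp]; linarith
  have hpos : ∀ t ∈ Set.uIcc a b, (0:ℝ) < t := by
    rw [Set.uIcc_of_le hab]; intro t ht; exact lt_of_lt_of_le ha0 ht.1
  have h2pi : (0:ℝ) < 2 * π := Real.two_pi_pos
  set u : ℝ → ℝ := fun t => -Real.cos (2*π*t) / (2*π) with hu_def
  have hu : ∀ x ∈ Set.uIcc a b, HasDerivAt u (Real.sin (2*π*x)) x :=
    fun x _ => hder_u (2*π) h2pi.ne' x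
  have hv : ∀ x ∈ Set.uIcc a b, HasDerivAt (fun t : ℝ => t ^ p) (p * x ^ (p-1)) x :=
    fun x hx => Real.hasDerivAt_rpow_const (Or.inl (hpos x hx).ne')
  have hu' : IntervalIntegrable (fun t : ℝ => Real.sin (2*π*t)) volume a b :=
    ((Real.continuous_sin.comp (continuous_const.mul continuous_id))).intervalIntegrable _ _
  have hv' : IntervalIntegrable (fun t : ℝ => p * t ^ (p-1)) volume a b :=
    (continuousOn_const.mul (contOn_rpow (p-1) _ hpos)).intervalIntegrable
  have ibp := intervalIntegral.integral_mul_deriv_eq_deriv_mul hu hv hu' hv'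
  -- rewrite our integral
  have hcongr : ∫ t in a..b, Real.sin (2*π*t) / t ^ (1+α)
      = ∫ t in a..b, Real.sin (2*π*t) * t ^ p := by
    apply intervalIntegral.integral_congr
    intro t ht
    show Real.sin (2*π*t) / t ^ (1+α) = Real.sin (2*π*t) * t ^ p
    rw [hp, Real.rpow_neg (hpos t ht).le, div_eq_mul_inv]
  have hmain : ∫ t in a..b, Real.sin (2*π*t) * t ^ p
      = u b * b ^ p - u a * a ^ p - ∫ t in a..b, u t * (p * t ^ (p-1)) := by
    linarith [ibp]
  have hbp : b ^ p ≤ a ^ p := Real.rpow_le_rpow_of_nonpos ha0 hab hpneg.le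
  have hap0 : (0:ℝ) < a ^ p := Real.rpow_pos_of_pos ha0 _
  have hbp0 : (0:ℝ) < b ^ p := Real.rpow_pos_of_pos (ha0.trans_le hab) _
  have hu_bd : ∀ t : ℝ, |u t| ≤ 1 / (2*π) := by
    intro t
    rw [hu_def]
    simp only [abs_div, abs_neg, abs_of_pos h2pi]
    gcongr
    exact abs_cos_le_one _
  have h0uIcc : (0:ℝ) ∉ Set.uIcc a b := fun h => lt_irrefl 0 (hpos 0 h)
  have hIg : IntervalIntegrable (fun t : ℝ => (1/(2*π)) * ((1+α) * t ^ (p-1))) volume a b :=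
    (continuousOn_const.mul (continuousOn_const.mul (contOn_rpow (p-1) _ hpos))).intervalIntegrable
  have hIg_val : ∫ t in a..b, (1/(2*π)) * ((1+α) * t ^ (p-1)) = (1/(2*π)) * (a ^ p - b ^ p) := by
    rw [intervalIntegral.integral_const_mul, intervalIntegral.integral_const_mul,
      integral_rpow (Or.inr ⟨by rw [hp]; intro h; nlinarith, h0uIcc⟩)]
    rw [show p - 1 + 1 = p by ring]
    congr 1
    have key : (1+α) = -p := by rw [hp]; ring
    rw [key]
    field_simp
    rw [mul_div_cancel_left₀ _ hpneg.ne]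
    ring
  have hI : |∫ t in a..b, u t * (p * t ^ (p-1))| ≤ (1/(2*π)) * a ^ p := by
    have h5 : |∫ t in a..b, u t * (p * t ^ (p-1))|
        ≤ |∫ t in a..b, (1/(2*π)) * ((1+α) * t ^ (p-1))| := by
      rw [← Real.norm_eq_abs]
      apply intervalIntegral.norm_integral_le_abs_of_norm_le ?_ hIg
      filter_upwards [ae_restrict_mem measurableSet_uIoc] with t ht
      have ht0 : 0 < t := by
        rw [Set.uIoc_of_le hab] at ht; exact lt_of_lt_of_le ha0 ht.1.le
      have htp : (0:ℝ) < t ^ (p-1) := Real.rpow_pos_of_pos ht0 _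
      rw [Real.norm_eq_abs, abs_mul, abs_mul, abs_of_neg hpneg, abs_of_pos htp]
      apply mul_le_mul (hu_bd t) ?_ (mul_nonneg (by linarith) htp.le) (by positivity)
      apply mul_le_mul_of_nonneg_right ?_ htp.le
      rw [hp]; linarith
    rw [hIg_val] at h5
    refine h5.trans ?_
    rw [abs_of_nonneg (mul_nonneg (by positivity) (sub_nonneg.mpr hbp))]
    gcongr
    linarith
  rw [hcongr, hmain]
  have habs : ∀ x y z : ℝ, |x - y - z| ≤ |x| + |y| + |z| := by
    intro x y z
    refine abs_le.mpr ⟨?_, ?_⟩ <;>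
      [skip; skip] <;>
      · have := le_abs_self x; have := neg_abs_le x
        have := le_abs_self y; have := neg_abs_le y
        have := le_abs_self z; have := neg_abs_le z
        linarith
  have hub : |u b * b ^ p| ≤ (1/(2*π)) * a ^ p := by
    rw [abs_mul, abs_of_pos hbp0]
    exact mul_le_mul (hu_bd b) hbp hbp0.le (by positivity)
  have hua : |u a * a ^ p| ≤ (1/(2*π)) * a ^ p := by
    rw [abs_mul, abs_of_pos hap0]
    exact mul_le_mul (hu_bd a) le_rfl hap0.le (by positivity)
  have hpi : (3:ℝ) ≤ 2 * π := by nlinarith [Real.pi_gt_three]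
  calc |u b * b ^ p - u a * a ^ p - ∫ t in a..b, u t * (p * t ^ (p-1))|
      ≤ |u b * b ^ p| + |u a * a ^ p| + |∫ t in a..b, u t * (p * t ^ (p-1))| := habs _ _ _
    _ ≤ (1/(2*π)) * a ^ p + (1/(2*π)) * a ^ p + (1/(2*π)) * a ^ p := by
        exact add_le_add (add_le_add hub hua) hI
    _ = (3/(2*π)) * a ^ p := by ring
    _ ≤ 1 * a ^ p := by
        apply mul_le_mul_of_nonneg_right ?_ hap0.le
        rw [div_le_one h2pi]
        exact hpi
    _ = a ^ p := one_mul _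

lemma subst_lemma (α : ℝ) (j N : ℕ) (hN : 1 ≤ N) :
    ∫ h in (1 / 2 ^ N : ℝ)..1, Real.sin (2*π*(2:ℝ)^j*h) / h ^ (1+α)
      = (2:ℝ) ^ ((j:ℝ)*α) *
        ∫ t in ((2:ℝ) ^ ((j:ℝ) - (N:ℝ)))..((2:ℝ) ^ (j:ℝ)), Real.sin (2*π*t) / t ^ (1+α) := by
  have hA : (0:ℝ) < 1 / 2 ^ N := by positivity
  have hA1 : (1 / 2 ^ N : ℝ) ≤ 1 := by
    rw [div_le_one (by positivity)]
    exact one_le_pow₀ one_le_two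
  have hpos : ∀ h ∈ Set.uIcc (1 / 2 ^ N : ℝ) 1, (0:ℝ) < h := by
    rw [Set.uIcc_of_le hA1]; intro t ht; exact lt_of_lt_of_le hA ht.1
  set P : ℝ := (2:ℝ) ^ (j:ℝ) with hP
  have hPnat : P = (2:ℝ) ^ j := by rw [hP, Real.rpow_natCast]
  have hP0 : 0 < P := Real.rpow_pos_of_pos two_pos _
  set g : ℝ → ℝ := fun t => Real.sin (2*π*t) / t ^ (1+α) with hg
  have step1 : ∫ h in (1 / 2 ^ N : ℝ)..1, Real.sin (2*π*(2:ℝ)^j*h) / h ^ (1+α)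
      = P ^ (1+α) * ∫ h in (1 / 2 ^ N : ℝ)..1, g (P * h) := by
    rw [← intervalIntegral.integral_const_mul]
    apply intervalIntegral.integral_congr
    intro h hh
    have hh0 : 0 < h := hpos h hh
    show Real.sin (2*π*(2:ℝ)^j*h) / h ^ (1+α) = P ^ (1+α) * g (P * h)
    rw [hg]
    simp only
    rw [Real.mul_rpow hP0.le hh0.le, hPnat]
    have hne1 : ((2:ℝ)^j) ^ (1+α) ≠ 0 := by positivity
    have hne2 : h ^ (1+α) ≠ 0 := by positivity
    field_simp
  have step2 : ∫ h in (1 / 2 ^ N : ℝ)..1, g (P * h)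
      = P⁻¹ • ∫ t in (P * (1 / 2 ^ N))..(P * 1), g t :=
    intervalIntegral.integral_comp_mul_left g hP0.ne'
  have hbound : P * (1 / 2 ^ N) = (2:ℝ) ^ ((j:ℝ) - (N:ℝ)) := by
    rw [Real.rpow_sub two_pos, hPnat, Real.rpow_natCast, Real.rpow_natCast]
    ring
  rw [step1, step2, hbound, mul_one, smul_eq_mul]
  rw [show P ^ (1+α) * (P⁻¹ * ∫ t in ((2:ℝ) ^ ((j:ℝ) - (N:ℝ)))..P, g t)
      = (P ^ (1+α) * P⁻¹) * ∫ t in ((2:ℝ) ^ ((j:ℝ) - (N:ℝ)))..P, g t by ring]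
  congr 1
  rw [hP, ← Real.rpow_mul two_pos.le, ← Real.rpow_neg two_pos.le, ← Real.rpow_add two_pos]
  congr 1
  ring


lemma part1 (α : ℝ) (hα : 0 < α) (f : ℝ → ℝ)
    (hf : ∀ x : ℝ, f x = ∑' j : ℕ, (2 : ℝ) ^ (-(j : ℝ) * α) * Real.sin (2 * Real.pi * 2 ^ j * x))
    (N : ℕ) (hN : 1 ≤ N) (x : ℝ) :
    (∫ h in (1 / 2 ^ N : ℝ)..1, (f (x + h) - f (x - h)) / h ^ (1 + α)) =
      2 * ∑' j : ℕ,
        (∫ t in ((2:ℝ) ^ ((j:ℝ) - (N:ℝ)))..((2:ℝ) ^ (j:ℝ)), Real.sin (2*π*t) / t ^ (1+α))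
          * Real.cos (2 * Real.pi * 2 ^ j * x) := by
  set A : ℝ := (1 / 2 ^ N : ℝ) with hAdef
  have hA : (0:ℝ) < A := by positivity
  have hA1 : A ≤ 1 := by
    rw [hAdef, div_le_one (by positivity)]
    exact one_le_pow₀ one_le_two
  set F : ℕ → ℝ → ℝ := fun j h =>
    ((2 : ℝ) ^ (-(j : ℝ) * α) * Real.sin (2 * Real.pi * 2 ^ j * (x + h))
      - (2 : ℝ) ^ (-(j : ℝ) * α) * Real.sin (2 * Real.pi * 2 ^ j * (x - h))) / h ^ (1 + α)
    with hFdef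
  have hq0 : (0:ℝ) < (2:ℝ) ^ (-α) := Real.rpow_pos_of_pos two_pos _
  have hq1 : (2:ℝ) ^ (-α) < 1 :=
    Real.rpow_lt_one_of_one_lt_of_neg one_lt_two (by linarith)
  have hgeo : Summable fun j : ℕ => ((2:ℝ) ^ (-α)) ^ j :=
    summable_geometric_of_lt_one hq0.le hq1
  have hcoef : ∀ j : ℕ, (2:ℝ) ^ (-(j:ℝ) * α) = ((2:ℝ) ^ (-α)) ^ j := by
    intro j
    rw [← Real.rpow_natCast ((2:ℝ) ^ (-α)) j, ← Real.rpow_mul two_pos.le]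
    congr 1
    ring
  have hsum_sin : ∀ y : ℝ,
      Summable fun j : ℕ => (2 : ℝ) ^ (-(j : ℝ) * α) * Real.sin (2 * Real.pi * 2 ^ j * y) := by
    intro y
    apply Summable.of_norm_bounded hgeo
    intro j
    rw [Real.norm_eq_abs, abs_mul, hcoef j, abs_of_pos (pow_pos hq0 j)]
    exact mul_le_of_le_one_right (pow_pos hq0 j).le (Real.abs_sin_le_one _)
  have hpos' : ∀ h ∈ Set.Ioc A 1, (0:ℝ) < h := fun h hh => hA.trans hh.1
  set K : ℝ := (A ^ (1+α))⁻¹ with hKdef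
  have hK0 : 0 < K := by positivity
  have hFcont : ∀ j : ℕ, ContinuousOn (F j) (Set.Icc A 1) := by
    intro j
    rw [hFdef]
    apply ContinuousOn.div
    · apply ContinuousOn.sub <;>
      · apply ContinuousOn.mul continuousOn_const
        exact (Real.continuous_sin.comp (by continuity)).continuousOn
    · exact ContinuousOn.rpow_const continuousOn_id
        (fun t ht => Or.inl (lt_of_lt_of_le hA ht.1).ne')
    · intro t ht
      exact (Real.rpow_pos_of_pos (lt_of_lt_of_le hA ht.1) _).ne'
  have hF_int : ∀ j : ℕ, IntegrableOn (F j) (Set.Ioc A 1) volume :=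
    fun j => ((hFcont j).integrableOn_Icc).mono_set Set.Ioc_subset_Icc_self
  have hFbound : ∀ j : ℕ, ∀ h ∈ Set.Ioc A 1, ‖F j h‖ ≤ ((2:ℝ) ^ (-α)) ^ j * (2 * K) := by
    intro j h hh
    have hh0 : 0 < h := hpos' h hh
    have hrp : (0:ℝ) < h ^ (1+α) := Real.rpow_pos_of_pos hh0 _
    have hKb : (h ^ (1+α))⁻¹ ≤ K := by
      rw [hKdef]
      exact inv_anti₀ (by positivity) (Real.rpow_le_rpow hA.le hh.1.le (by linarith))
    have hnum : |(2 : ℝ) ^ (-(j : ℝ) * α) * Real.sin (2 * Real.pi * 2 ^ j * (x + h))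
        - (2 : ℝ) ^ (-(j : ℝ) * α) * Real.sin (2 * Real.pi * 2 ^ j * (x - h))|
        ≤ ((2:ℝ) ^ (-α)) ^ j * 2 := by
      rw [← mul_sub, abs_mul, hcoef j, abs_of_pos (pow_pos hq0 j)]
      apply mul_le_mul_of_nonneg_left ?_ (pow_pos hq0 j).le
      calc |Real.sin (2 * Real.pi * 2 ^ j * (x + h)) - Real.sin (2 * Real.pi * 2 ^ j * (x - h))|
          ≤ |Real.sin (2 * Real.pi * 2 ^ j * (x + h))| + |Real.sin (2 * Real.pi * 2 ^ j * (x - h))| :=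
            abs_sub _ _
        _ ≤ 1 + 1 := add_le_add (Real.abs_sin_le_one _) (Real.abs_sin_le_one _)
        _ = 2 := by norm_num
    rw [hFdef]
    simp only
    rw [Real.norm_eq_abs, abs_div, abs_of_pos hrp, div_eq_mul_inv]
    calc |(2 : ℝ) ^ (-(j : ℝ) * α) * Real.sin (2 * Real.pi * 2 ^ j * (x + h))
        - (2 : ℝ) ^ (-(j : ℝ) * α) * Real.sin (2 * Real.pi * 2 ^ j * (x - h))| * (h ^ (1+α))⁻¹
        ≤ (((2:ℝ) ^ (-α)) ^ j * 2) * K :=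
          mul_le_mul hnum hKb (by positivity) (by positivity)
      _ = ((2:ℝ) ^ (-α)) ^ j * (2 * K) := by ring
  have hmeas : (volume (Set.Ioc A 1)).toReal ≤ 1 := by
    rw [Real.volume_Ioc, ENNReal.toReal_ofReal (by linarith)]
    linarith
  have hF_norm_sum : Summable fun j : ℕ => ∫ h in Set.Ioc A 1, ‖F j h‖ := by
    apply Summable.of_nonneg_of_le
      (fun j => integral_nonneg (fun h => norm_nonneg _)) ?_ (hgeo.mul_right (2 * K))
    intro j
    calc ∫ h in Set.Ioc A 1, ‖F j h‖
        ≤ ∫ _h in Set.Ioc A 1, ((2:ℝ) ^ (-α)) ^ j * (2 * K) :=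
          setIntegral_mono_on (hF_int j).norm
            (integrableOn_const measure_Ioc_lt_top.ne) measurableSet_Ioc (hFbound j)
      _ = (volume (Set.Ioc A 1)).toReal * (((2:ℝ) ^ (-α)) ^ j * (2 * K)) := by
          rw [setIntegral_const, smul_eq_mul, measureReal_def]
      _ ≤ 1 * (((2:ℝ) ^ (-α)) ^ j * (2 * K)) :=
          mul_le_mul_of_nonneg_right hmeas (by positivity)
      _ = ((2:ℝ) ^ (-α)) ^ j * (2 * K) := one_mul _
  have H := hasSum_integral_of_summable_integral_norm
    (μ := volume.restrict (Set.Ioc A 1)) hF_int hF_norm_sum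
  have hIoc : ∫ h in Set.Ioc A 1, (∑' j : ℕ, F j h)
      = ∫ h in A..1, (f (x + h) - f (x - h)) / h ^ (1 + α) := by
    rw [intervalIntegral.integral_of_le hA1]
    apply setIntegral_congr_fun measurableSet_Ioc
    intro h hh
    rw [hFdef]
    simp only
    rw [tsum_div_const, Summable.tsum_sub (hsum_sin (x+h)) (hsum_sin (x-h)), ← hf (x+h), ← hf (x-h)]
  have hterm : ∀ j : ℕ, ∫ h in Set.Ioc A 1, F j h
      = 2 * ((∫ t in ((2:ℝ) ^ ((j:ℝ) - (N:ℝ)))..((2:ℝ) ^ (j:ℝ)), Real.sin (2*π*t) / t ^ (1+α))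
          * Real.cos (2 * Real.pi * 2 ^ j * x)) := by
    intro j
    rw [← intervalIntegral.integral_of_le hA1]
    have e1 : ∫ h in A..1, F j h
        = ((2:ℝ) ^ (-(j:ℝ)*α) * 2 * Real.cos (2 * Real.pi * 2 ^ j * x))
          * ∫ h in A..1, Real.sin (2*π*(2:ℝ)^j*h) / h ^ (1+α) := by
      rw [← intervalIntegral.integral_const_mul]
      apply intervalIntegral.integral_congr
      intro h hh
      show F j h = _
      rw [hFdef]
      simp only
      rw [← mul_sub, Real.sin_sub_sin]
      have e2 : (2 * Real.pi * 2 ^ j * (x + h) - 2 * Real.pi * 2 ^ j * (x - h))/2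
          = 2 * π * (2:ℝ) ^ j * h := by ring
      have e3 : (2 * Real.pi * 2 ^ j * (x + h) + 2 * Real.pi * 2 ^ j * (x - h))/2
          = 2 * Real.pi * (2:ℝ) ^ j * x := by ring
      rw [e2, e3]
      ring
    rw [e1, subst_lemma α j N hN]
    have hne : (2:ℝ) ^ (-(j:ℝ)*α) * (2:ℝ) ^ ((j:ℝ)*α) = 1 := by
      rw [← Real.rpow_add two_pos]
      norm_num
    set I : ℝ := ∫ t in ((2:ℝ) ^ ((j:ℝ) - (N:ℝ)))..((2:ℝ) ^ (j:ℝ)), Real.sin (2*π*t) / t ^ (1+α)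
    linear_combination (2 * I * Real.cos (2 * Real.pi * 2 ^ j * x)) * hne
  calc ∫ h in A..1, (f (x + h) - f (x - h)) / h ^ (1 + α)
      = ∫ h in Set.Ioc A 1, (∑' j : ℕ, F j h) := hIoc.symm
    _ = ∑' j : ℕ, ∫ h in Set.Ioc A 1, F j h := H.tsum_eq.symm
    _ = ∑' j : ℕ, 2 * ((∫ t in ((2:ℝ) ^ ((j:ℝ) - (N:ℝ)))..((2:ℝ) ^ (j:ℝ)),
          Real.sin (2*π*t) / t ^ (1+α)) * Real.cos (2 * Real.pi * 2 ^ j * x)) := tsum_congr hterm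
    _ = 2 * ∑' j : ℕ, (∫ t in ((2:ℝ) ^ ((j:ℝ) - (N:ℝ)))..((2:ℝ) ^ (j:ℝ)),
          Real.sin (2*π*t) / t ^ (1+α)) * Real.cos (2 * Real.pi * 2 ^ j * x) := tsum_mul_left

lemma coeff_bound (α : ℝ) (hα : 0 < α) (j N : ℕ) :
    |∫ t in ((2:ℝ) ^ ((j:ℝ) - (N:ℝ)))..((2:ℝ) ^ (j:ℝ)), Real.sin (2*π*t) / t ^ (1+α)|
      ≤ (1/α + 1) * (2:ℝ) ^ (-((j:ℝ) - (N:ℝ)) * (1+α)) := by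
  set e : ℝ := (j:ℝ) - (N:ℝ) with he
  have ha0 : (0:ℝ) < (2:ℝ) ^ e := Real.rpow_pos_of_pos two_pos _
  have hab : (2:ℝ) ^ e ≤ (2:ℝ) ^ (j:ℝ) :=
    Real.rpow_le_rpow_of_exponent_le one_le_two (by rw [he]; linarith [Nat.cast_nonneg (α := ℝ) N])
  have hpow : ∀ q : ℝ, ((2:ℝ) ^ e) ^ q = (2:ℝ) ^ (e * q) := fun q =>
    (Real.rpow_mul two_pos.le e q).symm
  have htgt : (0:ℝ) < (2:ℝ) ^ (-e * (1+α)) := Real.rpow_pos_of_pos two_pos _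
  by_cases hcase : (0:ℝ) ≤ e
  · have ha1 : (1:ℝ) ≤ (2:ℝ) ^ e := by
      have h := Real.rpow_le_rpow_of_exponent_le one_le_two hcase
      rwa [Real.rpow_zero] at h
    refine (bound_osc α _ _ hα ha1 hab).trans ?_
    rw [hpow]
    rw [show e * -(1+α) = -e * (1+α) by ring]
    nlinarith [htgt, mul_pos (one_div_pos.mpr hα) htgt]
  · push_neg at hcase
    refine (bound_triv α _ _ hα ha0 hab).trans ?_
    rw [hpow, show e * -α = (-e) * α by ring, div_eq_mul_inv, mul_comm, ← one_div]
    apply mul_le_mul ?_ ?_ (Real.rpow_pos_of_pos two_pos _).le (by positivity)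
    · linarith
    · exact Real.rpow_le_rpow_of_exponent_le one_le_two (by nlinarith)

theorem stmt13 (α : ℝ) (hα : 0 < α) (hα1 : α < 1) (f : ℝ → ℝ)
    (hf : ∀ x : ℝ, f x = ∑' j : ℕ, (2 : ℝ) ^ (-(j : ℝ) * α) * Real.sin (2 * Real.pi * 2 ^ j * x))
    (c : ℕ → ℕ → ℝ)
    (hc : ∀ j N : ℕ, c j N =
      ∫ t in ((2 : ℝ) ^ ((j : ℝ) - (N : ℝ)))..((2 : ℝ) ^ (j : ℝ)),
        Real.sin (2 * Real.pi * t) / t ^ (1 + α)) :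
    (∀ N : ℕ, 1 ≤ N → ∀ x : ℝ,
      (∫ h in (1 / 2 ^ N : ℝ)..1, (f (x + h) - f (x - h)) / h ^ (1 + α)) =
        2 * ∑' j : ℕ, c j N * Real.cos (2 * Real.pi * 2 ^ j * x)) ∧
    ∃ c₁ : ℝ, 0 < c₁ ∧
      (∀ j N : ℕ, 1 ≤ j → 1 ≤ N →
        |c j N| ≤ c₁ * (2 : ℝ) ^ (-((j : ℝ) - (N : ℝ)) * (1 + α))) ∧
      (∀ N : ℕ, 1 ≤ N → ∑' j : ℕ, |c (N + j) N| ≤ 2 * c₁) := by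
  have hcb : ∀ j N : ℕ, |c j N| ≤ (1/α + 1) * (2 : ℝ) ^ (-((j : ℝ) - (N : ℝ)) * (1 + α)) := by
    intro j N
    rw [hc]
    exact coeff_bound α hα j N
  constructor
  · intro N hN x
    rw [part1 α hα f hf N hN x]
    congr 1
    apply tsum_congr
    intro j
    rw [hc j N]
  · refine ⟨1/α + 1, by positivity, fun j N _ _ => hcb j N, ?_⟩
    intro N hN
    set r : ℝ := (2:ℝ) ^ (-(1+α)) with hr
    have hr0 : 0 < r := Real.rpow_pos_of_pos two_pos _
    have hrhalf : r ≤ 1/2 := by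
      have h := Real.rpow_le_rpow_of_exponent_le one_le_two (show -(1+α) ≤ -1 by linarith)
      rw [Real.rpow_neg_one] at h
      rw [hr]
      linarith
    have hr1 : r < 1 := lt_of_le_of_lt hrhalf (by norm_num)
    have hbnd : ∀ j : ℕ, |c (N + j) N| ≤ (1/α + 1) * r ^ j := by
      intro j
      refine (hcb (N + j) N).trans_eq ?_
      congr 1
      rw [hr, ← Real.rpow_natCast ((2:ℝ) ^ (-(1+α))) j, ← Real.rpow_mul two_pos.le]
      congr 1
      push_cast
      ring
    have hgeo : Summable fun j : ℕ => (1/α + 1) * r ^ j :=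
      (summable_geometric_of_lt_one hr0.le hr1).mul_left _
    have hsum : Summable fun j : ℕ => |c (N + j) N| :=
      Summable.of_nonneg_of_le (fun j => abs_nonneg _) hbnd hgeo
    calc ∑' j : ℕ, |c (N + j) N| ≤ ∑' j : ℕ, (1/α + 1) * r ^ j := Summable.tsum_le_tsum hbnd hsum hgeo
      _ = (1/α + 1) * (1 - r)⁻¹ := by
          rw [tsum_mul_left, tsum_geometric_of_lt_one hr0.le hr1]
      _ ≤ (1/α + 1) * 2 := by
          apply mul_le_mul_of_nonneg_left ?_ (by positivity)
          rw [show (2:ℝ) = ((1:ℝ)/2)⁻¹ by norm_num]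
          exact inv_anti₀ (by norm_num) (by linarith)
      _ = 2 * (1/α + 1) := by ring
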